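/- Let Y = {(a,b,m) : a,b ∈ ℚ, a < b, m ∈ ℤ/4ℤ} with relations: R((a,b,m),(c,d,n)) iff (a,b) = (c,d) and n = m+1; E((a,b,m),(c,d,n)) iff (a,b)_m = (c,d)_n and |{a,b} ∩ {c,d}| = 1, where (a,b)_m denotes a if m ∈ {0,2} and b if m ∈ {1,3}; and N((a,b,m),(c,d,n)) iff {a,b} ∩ {c,d} = ∅. Let H ⊆ ℚ with |H| ≥ 3, and let e : Y → Y preserve R, E, N and satisfy: for all a,b ∈ H with a < b and all m ∈ ℤ/4ℤ, the first two coordinates of e(a,b,m) are again (a,b). Then there exists a set S of 2-element subsets of ℚ such that for all a,b ∈ H with a < b and all m ∈ ℤ/4ℤ: e(a,b,m) = (a,b,m+2) if {a,b} ∈ S, and e(a,b,m) = (a,b,m) otherwise. -/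

import Mathlib

/-- Triples `(a, b, m)` with `a, b ∈ ℚ` and `m ∈ ℤ/4ℤ`. -/
abbrev Trip : Type := ℚ × ℚ × ZMod 4

/-- `(a,b)_m`: equal to `a` if `m ∈ {0,2}` and to `b` if `m ∈ {1,3}`. -/
def selCoord (p : Trip) : ℚ := if p.2.2 = 0 ∨ p.2.2 = 2 then p.1 else p.2.1

/-- The unordered pair `{a, b}` associated with a triple `(a, b, m)`. -/
def pairOf (p : Trip) : Finset ℚ := {p.1, p.2.1}

/-- `R((a,b,m),(c,d,n))` iff `(a,b) = (c,d)` and `n = m + 1`. -/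
def Rrel (u v : Trip) : Prop := u.1 = v.1 ∧ u.2.1 = v.2.1 ∧ v.2.2 = u.2.2 + 1

/-- `E((a,b,m),(c,d,n))` iff `(a,b)_m = (c,d)_n` and `|{a,b} ∩ {c,d}| = 1`. -/
def Erel (u v : Trip) : Prop := selCoord u = selCoord v ∧ (pairOf u ∩ pairOf v).card = 1

/-- `N((a,b,m),(c,d,n))` iff `{a,b} ∩ {c,d} = ∅`. -/
def Nrel (u v : Trip) : Prop := pairOf u ∩ pairOf v = ∅

/-- The domain `Y` of triples `(a, b, m)` with `a < b`. -/
abbrev Ydom : Type := {p : Trip // p.1 < p.2.1}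

/-- A map `Y → Y` preserving the relations `R`, `E`, `N`. -/
def IsHomY (e : Ydom → Ydom) : Prop :=
  (∀ u v : Ydom, Rrel u.1 v.1 → Rrel (e u).1 (e v).1) ∧
  (∀ u v : Ydom, Erel u.1 v.1 → Erel (e u).1 (e v).1) ∧
  (∀ u v : Ydom, Nrel u.1 v.1 → Nrel (e u).1 (e v).1)

lemma pair_eq_pair {a b a' b' : ℚ} (h1 : a < b) (h2 : a' < b')
    (h : ({a, b} : Finset ℚ) = {a', b'}) : a = a' ∧ b = b' := by
  have hmem := Finset.ext_iff.mp h
  simp only [Finset.mem_insert, Finset.mem_singleton] at hmem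
  have ha := (hmem a).mp (Or.inl rfl)
  have hb := (hmem b).mp (Or.inr rfl)
  have ha' := (hmem a').mpr (Or.inl rfl)
  have hb' := (hmem b').mpr (Or.inr rfl)
  rcases ha with h | h <;> rcases hb with h' | h' <;>
    rcases ha' with h'' | h'' <;> rcases hb' with h''' | h''' <;>
    constructor <;> linarith

lemma inter_pair {a b h : ℚ} (hba : b ≠ a) (hbh : b ≠ h) :
    (({a, b} : Finset ℚ) ∩ {a, h}).card = 1 := by
  have : (({a, b} : Finset ℚ) ∩ {a, h}) = {a} := by
    ext x
    simp only [Finset.mem_inter, Finset.mem_insert, Finset.mem_singleton]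
    constructor
    · rintro ⟨h1 | h1, h2 | h2⟩ <;> first | exact h1 | (exfalso; subst h1; tauto)
    · rintro rfl; exact ⟨Or.inl rfl, Or.inl rfl⟩
  rw [this, Finset.card_singleton]

theorem local_flip (H : Set ℚ)
    (hH : ∃ a b c : ℚ, a ∈ H ∧ b ∈ H ∧ c ∈ H ∧ a ≠ b ∧ a ≠ c ∧ b ≠ c)
    (e : Ydom → Ydom) (he : IsHomY e)
    (hfix : ∀ (a b : ℚ), a ∈ H → b ∈ H → ∀ (hab : a < b) (m : ZMod 4),
      (e ⟨(a, b, m), hab⟩).1.1 = a ∧ (e ⟨(a, b, m), hab⟩).1.2.1 = b) :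
    ∃ S : Set (Finset ℚ), ∀ (a b : ℚ), a ∈ H → b ∈ H → ∀ (hab : a < b) (m : ZMod 4),
      (({a, b} : Finset ℚ) ∈ S → e ⟨(a, b, m), hab⟩ = ⟨(a, b, m + 2), hab⟩) ∧
      (({a, b} : Finset ℚ) ∉ S → e ⟨(a, b, m), hab⟩ = ⟨(a, b, m), hab⟩) := by
  obtain ⟨x, y, z, hx, hy, hz, hxy, hxz, hyz⟩ := hH
  -- the third coordinate shifts by a constant
  have hstep : ∀ (a b : ℚ) (hab : a < b) (m : ZMod 4),
      (e ⟨(a, b, m + 1), hab⟩).1.2.2 = (e ⟨(a, b, m), hab⟩).1.2.2 + 1 := by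
    intro a b hab m
    exact (he.1 ⟨(a, b, m), hab⟩ ⟨(a, b, m + 1), hab⟩ ⟨rfl, rfl, rfl⟩).2.2
  have hthird : ∀ (a b : ℚ) (hab : a < b) (m : ZMod 4),
      (e ⟨(a, b, m), hab⟩).1.2.2 = (e ⟨(a, b, 0), hab⟩).1.2.2 + m := by
    intro a b hab m
    have hm : m = 0 ∨ m = 1 ∨ m = 2 ∨ m = 3 := by revert m; decide
    rcases hm with rfl | rfl | rfl | rfl
    · rw [add_zero]
    · rw [show (1 : ZMod 4) = 0 + 1 by decide, hstep]; ring
    · rw [show (2 : ZMod 4) = 0 + 1 + 1 by decide, hstep, hstep]; ring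
    · rw [show (3 : ZMod 4) = 0 + 1 + 1 + 1 by decide, hstep, hstep, hstep]; ring
  -- the shift is 0 or 2
  have hkey : ∀ (a b : ℚ), a ∈ H → b ∈ H → ∀ (hab : a < b),
      (e ⟨(a, b, 0), hab⟩).1.2.2 = 0 ∨ (e ⟨(a, b, 0), hab⟩).1.2.2 = 2 := by
    intro a b ha hb hab
    by_contra hc
    push_neg at hc
    -- find a third point
    have hth : ∃ h ∈ H, h ≠ a ∧ h ≠ b := by
      by_cases h1 : x ≠ a ∧ x ≠ b
      · exact ⟨x, hx, h1⟩
      by_cases h2 : y ≠ a ∧ y ≠ b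
      · exact ⟨y, hy, h2⟩
      refine ⟨z, hz, ?_, ?_⟩ <;>
      · rcases not_and_or.mp h1 with h1' | h1' <;> rcases not_and_or.mp h2 with h2' | h2' <;>
          push_neg at h1' h2' <;> intro hz' <;> subst hz' <;>
          first
            | exact hxz h1'
            | exact hyz h2'
            | exact hxy (h1'.trans h2'.symm)
    obtain ⟨h, hhH, hha, hhb⟩ := hth
    set u : Ydom := ⟨(a, b, 0), hab⟩ with hu
    have hselu : selCoord (e u).1 = b := by
      have h1 := (hfix a b ha hb hab 0).1
      have h2 := (hfix a b ha hb hab 0).2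
      simp only [selCoord]
      rw [if_neg (by push_neg; exact hc), h2]
    rcases lt_or_gt_of_ne (Ne.symm hha) with hah | hha'
    · -- a < h, use t = (a, h, 0)
      set t : Ydom := ⟨(a, h, 0), hah⟩ with ht
      have hE : Erel u.1 t.1 := by
        constructor
        · simp [selCoord, u, t]
        · simp only [pairOf]
          exact inter_pair hab.ne' hhb.symm
      have hE' := he.2.1 u t hE
      have hsel := hE'.1
      rw [hselu] at hsel
      have h1 := (hfix a h ha hhH hah 0).1
      have h2 := (hfix a h ha hhH hah 0).2
      simp only [selCoord] at hsel
      split_ifs at hsel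
      · rw [h1] at hsel; exact hab.ne' hsel
      · rw [h2] at hsel; exact hhb hsel.symm
    · -- h < a, use t = (h, a, 1)
      set t : Ydom := ⟨(h, a, 1), hha'⟩ with ht
      have hE : Erel u.1 t.1 := by
        constructor
        · simp [selCoord, u, t, show ¬((1 : ZMod 4) = 0 ∨ (1 : ZMod 4) = 2) by decide]
        · simp only [pairOf]
          rw [show ({h, a} : Finset ℚ) = {a, h} from Finset.pair_comm h a]
          exact inter_pair hab.ne' hhb.symm
      have hE' := he.2.1 u t hE
      have hsel := hE'.1
      rw [hselu] at hsel
      have h1 := (hfix h a hhH ha hha' 1).1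
      have h2 := (hfix h a hhH ha hha' 1).2
      simp only [selCoord] at hsel
      split_ifs at hsel
      · rw [h1] at hsel; exact hhb hsel.symm
      · rw [h2] at hsel; exact hab.ne' hsel
  refine ⟨{s | ∃ a b : ℚ, ∃ hab : a < b, a ∈ H ∧ b ∈ H ∧ s = {a, b} ∧
    (e ⟨(a, b, 0), hab⟩).1.2.2 = 2}, ?_⟩
  intro a b ha hb hab m
  constructor
  · rintro ⟨a', b', hab', ha', hb', hpair, h2⟩
    obtain ⟨rfl, rfl⟩ := pair_eq_pair hab hab' hpair
    have hf := hfix a b ha hb hab m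
    apply Subtype.ext
    refine Prod.ext hf.1 (Prod.ext hf.2 ?_)
    rw [hthird a b hab m, h2, add_comm]
  · intro hS
    have h0 : (e ⟨(a, b, 0), hab⟩).1.2.2 = 0 := by
      rcases hkey a b ha hb hab with h | h
      · exact h
      · exact absurd ⟨a, b, hab, ha, hb, rfl, h⟩ hS
    have hf := hfix a b ha hb hab m
    apply Subtype.ext
    refine Prod.ext hf.1 (Prod.ext hf.2 ?_)
    rw [hthird a b hab m, h0, zero_add]
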